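/- Every f = h + conj(g) ∈ F_H^0 satisfies |h'(z)| + |g'(z)| ≤ 1 + |z| and |h'(z)| - |g'(z)| ≥ 1 - |z| for all z ∈ 𝔻. -/

import Mathlib

open Metric

/-- Choose a unimodular `c` aligning the phases of `a` and `b`. -/
lemma exists_unit_align (a b : ℂ) : ∃ c : ℂ, ‖c‖ = 1 ∧ ‖a + c * b‖ = ‖a‖ + ‖b‖ := by
  rcases eq_or_ne a 0 with rfl | ha
  · exact ⟨1, by simp, by simp⟩
  rcases eq_or_ne b 0 with rfl | hb
  · exact ⟨1, by simp, by simp⟩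
  refine ⟨a * b⁻¹ * ((‖b‖ : ℂ) / (‖a‖ : ℂ)), ?_, ?_⟩
  · have hna : (0:ℝ) < ‖a‖ := norm_pos_iff.2 ha
    have hnb : (0:ℝ) < ‖b‖ := norm_pos_iff.2 hb
    have hna' : ‖a‖ ≠ 0 := ne_of_gt hna
    have hnb' : ‖b‖ ≠ 0 := ne_of_gt hnb
    rw [norm_mul, norm_mul, norm_inv, norm_div, Complex.norm_real, Complex.norm_real,
      Real.norm_eq_abs, Real.norm_eq_abs, abs_of_pos hna, abs_of_pos hnb]
    field_simp
  · have hb' : b⁻¹ * b = 1 := inv_mul_cancel₀ hb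
    have : a * b⁻¹ * ((‖b‖ : ℂ) / (‖a‖ : ℂ)) * b = a * ((‖b‖ : ℂ) / (‖a‖ : ℂ)) := by
      rw [mul_right_comm, mul_assoc a, hb', mul_one]
    rw [this]
    have : a + a * ((‖b‖ : ℂ) / (‖a‖ : ℂ)) = a * (1 + (‖b‖ : ℂ) / (‖a‖ : ℂ)) := by ring
    rw [this, norm_mul]
    have hna : (0:ℝ) < ‖a‖ := norm_pos_iff.2 ha
    have hnb : (0:ℝ) ≤ ‖b‖ := norm_nonneg b
    have : ((1:ℂ) + (‖b‖ : ℂ) / (‖a‖ : ℂ)) = ((1 + ‖b‖ / ‖a‖ : ℝ) : ℂ) := by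
      push_cast; ring
    rw [this, Complex.norm_real, Real.norm_eq_abs, abs_of_pos (by positivity), mul_add,
      mul_one, mul_div_cancel₀ _ (ne_of_gt hna)]

theorem derivative_growth_bounds
    (h g : ℂ → ℂ)
    (hh : DifferentiableOn ℂ h (ball (0:ℂ) 1))
    (hg : DifferentiableOn ℂ g (ball (0:ℂ) 1))
    (h0 : h 0 = 0) (h1 : deriv h 0 = 1) (g0 : g 0 = 0) (g1 : deriv g 0 = 0)
    (hineq : ∀ z ∈ ball (0:ℂ) 1, ‖deriv h z - 1‖ < 1 - ‖deriv g z‖) :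
    ∀ z ∈ ball (0:ℂ) 1,
      ‖deriv h z‖ + ‖deriv g z‖ ≤ 1 + ‖z‖ ∧ 1 - ‖z‖ ≤ ‖deriv h z‖ - ‖deriv g z‖ := by
  intro z hz
  have hh' : DifferentiableOn ℂ (deriv h) (ball (0:ℂ) 1) :=
    ((hh.analyticOnNhd isOpen_ball).deriv).differentiableOn
  have hg' : DifferentiableOn ℂ (deriv g) (ball (0:ℂ) 1) :=
    ((hg.analyticOnNhd isOpen_ball).deriv).differentiableOn
  -- key estimate: ‖h'(z) - 1‖ + ‖g'(z)‖ ≤ ‖z‖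
  have key : ‖deriv h z - 1‖ + ‖deriv g z‖ ≤ ‖z‖ := by
    obtain ⟨c, hc1, hc2⟩ := exists_unit_align (deriv h z - 1) (deriv g z)
    set F : ℂ → ℂ := fun w => deriv h w - 1 + c * deriv g w with hF
    have hFd : DifferentiableOn ℂ F (ball (0:ℂ) 1) := by
      exact (hh'.sub (differentiableOn_const 1)).add
        ((differentiableOn_const c).mul hg')
    have hF0 : F 0 = 0 := by simp [hF, h1, g1]
    have hmaps : Set.MapsTo F (ball (0:ℂ) 1) (ball (0:ℂ) 1) := by
      intro w hw
      rw [mem_ball_zero_iff]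
      calc ‖F w‖ ≤ ‖deriv h w - 1‖ + ‖c * deriv g w‖ := norm_add_le _ _
        _ = ‖deriv h w - 1‖ + ‖deriv g w‖ := by rw [norm_mul, hc1, one_mul]
        _ < (1 - ‖deriv g w‖) + ‖deriv g w‖ := by
            linarith [hineq w hw]
        _ = 1 := by ring
    have := Complex.norm_le_norm_of_mapsTo_ball hFd (hmaps.mono_right ball_subset_closedBall) hF0
      (by simpa [mem_ball_zero_iff] using hz)
    calc ‖deriv h z - 1‖ + ‖deriv g z‖ = ‖F z‖ := hc2.symm
      _ ≤ ‖z‖ := this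
  constructor
  · have : ‖deriv h z‖ ≤ 1 + ‖deriv h z - 1‖ := by
      calc ‖deriv h z‖ = ‖1 + (deriv h z - 1)‖ := by ring_nf
        _ ≤ ‖(1:ℂ)‖ + ‖deriv h z - 1‖ := norm_add_le _ _
        _ = 1 + ‖deriv h z - 1‖ := by simp
    linarith
  · have : 1 - ‖deriv h z - 1‖ ≤ ‖deriv h z‖ := by
      have := norm_sub_norm_le (1:ℂ) (1 - deriv h z)
      simp only [norm_one] at this
      calc 1 - ‖deriv h z - 1‖ = ‖(1:ℂ)‖ - ‖1 - deriv h z‖ := by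
            rw [norm_one, norm_sub_rev]
        _ ≤ ‖1 - (1 - deriv h z)‖ := norm_sub_norm_le _ _
        _ = ‖deriv h z‖ := by ring_nf
    linarith
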